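/- Fix T > 0. Define g_j(t) := 1 − e^{2εΩ_j(t−T)} for j = 1,2 and χ̄(t) := diag(1, g₂(t), g₁(t), g₁(t)g₂(t)). Then χ̄(T) = diag(1,0,0,0), and for every t ∈ ℝ the matrix-valued function χ̄ is differentiable at t with χ̄′(t) = −i[H₀, χ̄(t)] − ε𝓛ᴰ†_{(0,0)}(χ̄(t)); i.e., χ̄ is the exact solution of the adjoint (costate) system of the Krotov-type method with zero controls and transversality condition χ(T) = ρ_target = diag(1,0,0,0). -/

import Mathlib

open Matrix Kronecker Complex
open scoped ComplexOrder

noncomputable section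

/-- 4×4 complex matrices, indexed by two-qubit (tensor-product) indices
in the order (0,0), (0,1), (1,0), (1,1). -/
abbrev M4 : Type := Matrix (Fin 2 × Fin 2) (Fin 2 × Fin 2) ℂ

/-- σ⁺ = [[0,0],[1,0]]. -/
def σp : Matrix (Fin 2) (Fin 2) ℂ := !![0, 0; 1, 0]
/-- σ⁻ = [[0,1],[0,0]]. -/
def σm : Matrix (Fin 2) (Fin 2) ℂ := !![0, 1; 0, 0]
/-- σ_z = diag(1,−1). -/
def σz : Matrix (Fin 2) (Fin 2) ℂ := !![1, 0; 0, -1]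

/-- σ₁⁺ = σ⁺ ⊗ I₂. -/
def s1p : M4 := σp ⊗ₖ (1 : Matrix (Fin 2) (Fin 2) ℂ)
/-- σ₁⁻ = σ⁻ ⊗ I₂. -/
def s1m : M4 := σm ⊗ₖ (1 : Matrix (Fin 2) (Fin 2) ℂ)
/-- σ₂⁺ = I₂ ⊗ σ⁺. -/
def s2p : M4 := (1 : Matrix (Fin 2) (Fin 2) ℂ) ⊗ₖ σp
/-- σ₂⁻ = I₂ ⊗ σ⁻. -/
def s2m : M4 := (1 : Matrix (Fin 2) (Fin 2) ℂ) ⊗ₖ σm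
/-- W₁ = σ_z ⊗ I₂. -/
def W1 : M4 := σz ⊗ₖ (1 : Matrix (Fin 2) (Fin 2) ℂ)
/-- W₂ = I₂ ⊗ σ_z. -/
def W2 : M4 := (1 : Matrix (Fin 2) (Fin 2) ℂ) ⊗ₖ σz

/-- diag(a,b,c,d) as a two-qubit 4×4 matrix. -/
def diag4 (a b c d : ℂ) : M4 :=
  Matrix.diagonal fun p => ![![a, b], ![c, d]] p.1 p.2

/-- Contribution of qubit j (with lowering/raising operators sm/sp) to the
controlled GKSL dissipator: Ω[(n+1)(2σ⁻ρσ⁺ − {σ⁺σ⁻,ρ}) + n(2σ⁺ρσ⁻ − {σ⁻σ⁺,ρ})]. -/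
def dissJ (sm sp : M4) (Ω nj : ℝ) (ρ : M4) : M4 :=
  (Ω : ℂ) • (((nj : ℂ) + 1) • (2 • (sm * ρ * sp) - (sp * sm * ρ + ρ * (sp * sm)))
    + (nj : ℂ) • (2 • (sp * ρ * sm) - (sm * sp * ρ + ρ * (sm * sp))))

/-- The controlled dissipator 𝓛ᴰ_n of the two-qubit master equation. -/
def diss (Ω1 Ω2 : ℝ) (n : ℝ × ℝ) (ρ : M4) : M4 :=
  dissJ s1m s1p Ω1 n.1 ρ + dissJ s2m s2p Ω2 n.2 ρ

/-- Contribution of qubit j to the adjoint superoperator: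
Ω[(n+1)(2σ⁺χσ⁻ − {σ⁺σ⁻,χ}) + n(2σ⁻χσ⁺ − {σ⁻σ⁺,χ})]. -/
def dissAdjJ (sm sp : M4) (Ω nj : ℝ) (χ : M4) : M4 :=
  (Ω : ℂ) • (((nj : ℂ) + 1) • (2 • (sp * χ * sm) - (sp * sm * χ + χ * (sp * sm)))
    + (nj : ℂ) • (2 • (sm * χ * sp) - (sm * sp * χ + χ * (sm * sp))))

/-- The adjoint superoperator 𝓛ᴰ†_n. -/
def dissAdj (Ω1 Ω2 : ℝ) (n : ℝ × ℝ) (χ : M4) : M4 :=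
  dissAdjJ s1m s1p Ω1 n.1 χ + dissAdjJ s2m s2p Ω2 n.2 χ

/-- Free Hamiltonian H₀ = (ω₁/2)W₁ + (ω₂/2)W₂. -/
def H0 (ω1 ω2 : ℝ) : M4 := ((ω1 / 2 : ℝ) : ℂ) • W1 + ((ω2 / 2 : ℝ) : ℂ) • W2

/-- Controlled Hamiltonian H_c = H₀ + ε(Λ₁n₁W₁ + Λ₂n₂W₂) + uV,
for c = (u, n₁, n₂) : Fin 3 → ℝ. -/
def Hc (ω1 ω2 Λ1 Λ2 ε : ℝ) (V : M4) (c : Fin 3 → ℝ) : M4 :=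
  H0 ω1 ω2 + (ε : ℂ) • (((Λ1 * c 1 : ℝ) : ℂ) • W1 + ((Λ2 * c 2 : ℝ) : ℂ) • W2)
    + ((c 0 : ℝ) : ℂ) • V

/-- Hilbert–Schmidt inner product ⟨A,B⟩ = Tr(A†B). -/
def hsInner (A B : M4) : ℂ := Matrix.trace (Aᴴ * B)

/-- Coherent switching function 𝒦ᵘ(χ,ρ) = ⟨χ, −i[V,ρ]⟩ (complex form). -/
def KuC (V χ ρ : M4) : ℂ := hsInner χ ((-Complex.I) • (V * ρ - ρ * V))

/-- Incoherent switching function for qubit j: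
𝒦ⁿʲ(χ,ρ) = ⟨χ, −i[Λ_j W_j, ρ] + εΩ_j(2σ_j⁻ρσ_j⁺ + 2σ_j⁺ρσ_j⁻ − 2ρ)⟩ (complex form). -/
def KnC (sm sp Wj : M4) (Λ ε Ω : ℝ) (χ ρ : M4) : ℂ :=
  hsInner χ ((-Complex.I) • ((Λ : ℂ) • (Wj * ρ - ρ * Wj))
    + ((ε * Ω : ℝ) : ℂ) • (2 • (sm * ρ * sp) + 2 • (sp * ρ * sm) - 2 • ρ))

/-- The real switching-function vector 𝒦ᶜ(χ,ρ) = (𝒦ᵘ(χ,ρ), 𝒦ⁿ¹(χ,ρ), 𝒦ⁿ²(χ,ρ)) ∈ ℝ³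
(for Hermitian χ, ρ the values of 𝒦ᵘ, 𝒦ⁿʲ are real, so the real parts are taken). -/
def Kc (Λ1 Λ2 ε Ω1 Ω2 : ℝ) (V χ ρ : M4) : Fin 3 → ℝ :=
  ![(KuC V χ ρ).re, (KnC s1m s1p W1 Λ1 ε Ω1 χ ρ).re, (KnC s2m s2p W2 Λ2 ε Ω2 χ ρ).re]

/-- Euclidean inner product on ℝ³. -/
def inner3 (x y : Fin 3 → ℝ) : ℝ := x 0 * y 0 + x 1 * y 1 + x 2 * y 2

/-- Squared Euclidean norm on ℝ³. -/
def norm3sq (x : Fin 3 → ℝ) : ℝ := inner3 x x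

/-- p_j(t) = 1 − (1/2)e^{−2εΩ_j t}. -/
def pbar (ε Ω t : ℝ) : ℝ := 1 - (1 / 2) * Real.exp (-2 * ε * Ω * t)
/-- q_j(t) = (1/2)e^{−2εΩ_j t}. -/
def qbar (ε Ω t : ℝ) : ℝ := (1 / 2) * Real.exp (-2 * ε * Ω * t)

/-- ρ̄(t) = diag(p₁p₂, p₁q₂, q₁p₂, q₁q₂): solution of the free GKSL evolution
with ρ̄(0) = (1/4)I₄. -/
def rhoBar (ε Ω1 Ω2 : ℝ) (t : ℝ) : M4 :=
  diag4 ((pbar ε Ω1 t * pbar ε Ω2 t : ℝ) : ℂ) ((pbar ε Ω1 t * qbar ε Ω2 t : ℝ) : ℂ)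
    ((qbar ε Ω1 t * pbar ε Ω2 t : ℝ) : ℂ) ((qbar ε Ω1 t * qbar ε Ω2 t : ℝ) : ℂ)

/-- g_j(t) = 1 − e^{2εΩ_j(t−T)}. -/
def gbar (ε Ω T t : ℝ) : ℝ := 1 - Real.exp (2 * ε * Ω * (t - T))

/-- χ̄(t) = diag(1, g₂, g₁, g₁g₂): solution of the adjoint system with zero
controls and χ̄(T) = diag(1,0,0,0). -/
def chiBar (ε Ω1 Ω2 T : ℝ) (t : ℝ) : M4 :=
  diag4 1 ((gbar ε Ω2 T t : ℝ) : ℂ) ((gbar ε Ω1 T t : ℝ) : ℂ)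
    ((gbar ε Ω1 T t * gbar ε Ω2 T t : ℝ) : ℂ)

attribute [local instance] Matrix.frobeniusNormedAddCommGroup Matrix.frobeniusNormedSpace

lemma diag4_eq (a b c d : ℂ) :
    diag4 a b c d = a • diag4 1 0 0 0 + b • diag4 0 1 0 0
      + c • diag4 0 0 1 0 + d • diag4 0 0 0 1 := by
  ext ⟨i, j⟩ ⟨k, l⟩
  fin_cases i <;> fin_cases j <;> fin_cases k <;> fin_cases l <;>
    simp [diag4, Matrix.diagonal]

lemma hasDerivAt_diag4 {f g h k : ℝ → ℂ} {f' g' h' k' : ℂ} {t : ℝ}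
    (hf : HasDerivAt f f' t) (hg : HasDerivAt g g' t)
    (hh : HasDerivAt h h' t) (hk : HasDerivAt k k' t) :
    HasDerivAt (fun s => diag4 (f s) (g s) (h s) (k s)) (diag4 f' g' h' k') t := by
  have K := (((hf.smul_const (diag4 1 0 0 0)).add (hg.smul_const (diag4 0 1 0 0))).add
    (hh.smul_const (diag4 0 0 1 0))).add (hk.smul_const (diag4 0 0 0 1))
  have H1 : (fun s => f s • diag4 1 0 0 0 + g s • diag4 0 1 0 0
      + h s • diag4 0 0 1 0 + k s • diag4 0 0 0 1)
      = fun s => diag4 (f s) (g s) (h s) (k s) := by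
    funext s; exact (diag4_eq _ _ _ _).symm
  rw [← diag4_eq] at K; rw [← H1]
  exact K

set_option maxHeartbeats 4000000 in
lemma rhs_eq (ω1 ω2 Ω1 Ω2 ε : ℝ) (a b c d : ℂ) :
    (-Complex.I) • (H0 ω1 ω2 * diag4 a b c d - diag4 a b c d * H0 ω1 ω2)
      - (ε : ℂ) • dissAdj Ω1 Ω2 (0, 0) (diag4 a b c d)
    = diag4 0 (-(2 * ε * Ω2) * (a - b)) (-(2 * ε * Ω1) * (a - c))
        (-(2 * ε * Ω1) * (b - d) - (2 * ε * Ω2) * (c - d)) := by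
  ext ⟨i, j⟩ ⟨k, l⟩
  simp only [H0, dissAdj, dissAdjJ, diag4, W1, W2, s1p, s1m, s2p, s2m, σp, σm, σz,
    Matrix.sub_apply, Matrix.add_apply, Matrix.smul_apply, Matrix.mul_apply,
    Matrix.kroneckerMap_apply, Fintype.sum_prod_type, Fin.sum_univ_two,
    Matrix.diagonal_apply, Matrix.one_apply, Prod.mk.injEq]
  fin_cases i <;> fin_cases j <;> fin_cases k <;> fin_cases l <;>
    simp <;> ring

lemma hasDerivAt_gbar (ε Ω T t : ℝ) :
    HasDerivAt (gbar ε Ω T) (-(2 * ε * Ω) * Real.exp (2 * ε * Ω * (t - T))) t := by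
  have h1 : HasDerivAt (fun s : ℝ => 2 * ε * Ω * (s - T)) (2 * ε * Ω) t := by
    have := ((hasDerivAt_id t).sub_const T).const_mul (2 * ε * Ω)
    simpa using this
  have h2 := h1.exp.const_sub 1
  have hfun : gbar ε Ω T = fun s => 1 - Real.exp (2 * ε * Ω * (s - T)) := rfl
  rw [hfun]
  refine h2.congr_deriv ?_
  ring

/-- χ̄(t) = diag(1, g₂, g₁, g₁g₂) with g_j(t) = 1 − e^{2εΩ_j(t−T)}
satisfies χ̄(T) = diag(1,0,0,0) and solves the adjoint (costate) system
χ̄′(t) = −i[H₀, χ̄(t)] − ε𝓛ᴰ†_{(0,0)}(χ̄(t)) for all t ∈ ℝ. -/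
theorem chiBar_solves_adjoint_system
    (ω1 ω2 Ω1 Ω2 ε : ℝ)
    (hω1 : 0 < ω1) (hω2 : 0 < ω2) (hΩ1 : 0 < Ω1) (hΩ2 : 0 < Ω2) (hε : 0 < ε)
    (T : ℝ) (hT : 0 < T) :
    chiBar ε Ω1 Ω2 T T = diag4 1 0 0 0
      ∧ ∀ t : ℝ, HasDerivAt (chiBar ε Ω1 Ω2 T)
          ((-Complex.I) • (H0 ω1 ω2 * chiBar ε Ω1 Ω2 T t - chiBar ε Ω1 Ω2 T t * H0 ω1 ω2)
            - (ε : ℂ) • dissAdj Ω1 Ω2 (0, 0) (chiBar ε Ω1 Ω2 T t)) t := by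
  constructor
  · simp [chiBar, gbar]
  · intro t
    have hg1 := hasDerivAt_gbar ε Ω1 T t
    have hg2 := hasDerivAt_gbar ε Ω2 T t
    have hD : HasDerivAt (chiBar ε Ω1 Ω2 T)
        (diag4 ((0 : ℝ) : ℂ) ((-(2 * ε * Ω2) * Real.exp (2 * ε * Ω2 * (t - T)) : ℝ) : ℂ)
          ((-(2 * ε * Ω1) * Real.exp (2 * ε * Ω1 * (t - T)) : ℝ) : ℂ)
          ((-(2 * ε * Ω1) * Real.exp (2 * ε * Ω1 * (t - T)) * gbar ε Ω2 T t
            + gbar ε Ω1 T t * (-(2 * ε * Ω2) * Real.exp (2 * ε * Ω2 * (t - T))) : ℝ) : ℂ)) t := by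
      have h1 : HasDerivAt (fun s : ℝ => ((1 : ℝ) : ℂ)) ((0 : ℝ) : ℂ) t := by
        simpa using hasDerivAt_const t ((1 : ℝ) : ℂ)
      exact hasDerivAt_diag4 h1 hg2.ofReal_comp hg1.ofReal_comp (hg1.mul hg2).ofReal_comp
    have hchi : chiBar ε Ω1 Ω2 T t = diag4 1 ((gbar ε Ω2 T t : ℝ) : ℂ)
        ((gbar ε Ω1 T t : ℝ) : ℂ) ((gbar ε Ω1 T t * gbar ε Ω2 T t : ℝ) : ℂ) := rfl
    rw [hchi, rhs_eq]
    convert hD using 2 <;> simp only [gbar, Complex.ofReal_zero] <;> push_cast <;> ring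
end
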